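/- Let r ∈ [n] with 2r ≤ n, and suppose στ = π where σ, τ ∈ T_r^n and π ∈ S_{2r} (i.e., π fixes every point outside [2r]). Then there exists δ ∈ C_{S_n}(π), the centralizer of π in S_n, such that σ^δ := δ⁻¹σδ and τ^δ := δ⁻¹τδ both lie in T_r^{2r} (i.e., both fix every point outside [2r]) and σ^δ τ^δ = π. -/
import Mathlib


open Finset

def T (n r : ℕ) : Finset (Equiv.Perm (Fin n)) :=
  univ.filter fun σ => σ.support.card ≤ r

/-- `FixesOutside n m ρ` : ρ induces the identity outside [m], i.e. ρ ∈ S_{[m]}. -/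
def FixesOutside (n m : ℕ) (ρ : Equiv.Perm (Fin n)) : Prop :=
  ∀ i : Fin n, ¬ ((i : ℕ) < m) → ρ i = i

/-- Lemma 3.1: if στ = π with σ,τ ∈ T_r^n and π ∈ S_{2r}, then there exists
δ ∈ C_{S_n}(π) with σ^δ, τ^δ ∈ T_r^{2r} and σ^δ τ^δ = π. -/
theorem conj_into_S2r (n r : ℕ) (hr : 1 ≤ r) (h2r : 2 * r ≤ n)
    (σ τ π : Equiv.Perm (Fin n))
    (hσ : σ ∈ T n r) (hτ : τ ∈ T n r)
    (hπ : FixesOutside n (2 * r) π)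
    (hmul : σ * τ = π) :
    ∃ δ : Equiv.Perm (Fin n), δ * π = π * δ ∧
      (δ⁻¹ * σ * δ) ∈ T n r ∧ FixesOutside n (2 * r) (δ⁻¹ * σ * δ) ∧
      (δ⁻¹ * τ * δ) ∈ T n r ∧ FixesOutside n (2 * r) (δ⁻¹ * τ * δ) ∧
      (δ⁻¹ * σ * δ) * (δ⁻¹ * τ * δ) = π := by
  classical
  simp only [T, mem_filter, mem_univ, true_and] at hσ hτ
  set K : Finset (Fin n) := univ.filter (fun i => (i : ℕ) < 2 * r) with hKdef
  set B : Finset (Fin n) := σ.support ∪ τ.support with hBdef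
  have hKmem : ∀ i : Fin n, i ∈ K ↔ (i : ℕ) < 2 * r := by
    intro i; simp [hKdef]
  have hcardK : K.card = 2 * r := by
    have h : ∀ m ∈ Finset.range (2 * r), m < n := fun m hm =>
      lt_of_lt_of_le (Finset.mem_range.mp hm) h2r
    have : K = (Finset.range (2 * r)).attachFin h := by
      ext i
      simp [hKmem, Finset.mem_attachFin]
    rw [this, Finset.card_attachFin, Finset.card_range]
  have hcardB : B.card ≤ 2 * r := by
    calc B.card ≤ σ.support.card + τ.support.card := card_union_le _ _
      _ ≤ 2 * r := by omega
  have hπsupp : π.support ⊆ B ∩ K := by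
    intro x hx
    rw [Finset.mem_inter]
    constructor
    · have := Equiv.Perm.support_mul_le σ τ
      rw [hmul] at this
      exact this hx
    · rw [hKmem]
      by_contra h
      exact (Equiv.Perm.mem_support.mp hx) (hπ x h)
  -- A : points of B outside K ; C : points of K outside B
  set A : Finset (Fin n) := B \ K with hAdef
  set C : Finset (Fin n) := K \ B with hCdef
  have hcardAC : A.card ≤ C.card := by
    have h1 := Finset.card_sdiff_add_card_inter B K
    have h2 := Finset.card_sdiff_add_card_inter K B
    rw [Finset.inter_comm K B] at h2
    rw [← hAdef] at h1
    rw [← hCdef] at h2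
    omega
  obtain ⟨C', hC'C, hC'card⟩ := Finset.exists_subset_card_eq hcardAC
  have e : {x // x ∈ A} ≃ {x // x ∈ C'} := Finset.equivOfCardEq hC'card.symm
  have hAC' : ∀ x : Fin n, x ∈ A → x ∈ C' → False := by
    intro x hxA hxC'
    have hxC := hC'C hxC'
    rw [hAdef, Finset.mem_sdiff] at hxA
    rw [hCdef, Finset.mem_sdiff] at hxC
    exact hxA.2 hxC.1
  set g : Fin n → Fin n := fun x =>
    if h : x ∈ A then (e ⟨x, h⟩ : Fin n)
    else if h : x ∈ C' then (e.symm ⟨x, h⟩ : Fin n) else x with hgdef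
  have hgA : ∀ (x : Fin n) (h : x ∈ A), g x = (e ⟨x, h⟩ : Fin n) := by
    intro x h; simp [hgdef, h]
  have hgC' : ∀ (x : Fin n) (h : x ∈ C'), g x = (e.symm ⟨x, h⟩ : Fin n) := by
    intro x h
    have hxA : x ∉ A := fun hA => hAC' x hA h
    simp [hgdef, hxA, h]
  have hgfix : ∀ x : Fin n, x ∉ A → x ∉ C' → g x = x := by
    intro x h1 h2; simp [hgdef, h1, h2]
  have hginv : Function.Involutive g := by
    intro x
    by_cases hxA : x ∈ A
    · rw [hgA x hxA]
      have hmem : ((e ⟨x, hxA⟩ : {x // x ∈ C'}) : Fin n) ∈ C' := (e ⟨x, hxA⟩).2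
      rw [hgC' _ hmem]
      have : (⟨((e ⟨x, hxA⟩ : {x // x ∈ C'}) : Fin n), hmem⟩ : {x // x ∈ C'}) =
          e ⟨x, hxA⟩ := rfl
      rw [this, Equiv.symm_apply_apply]
    · by_cases hxC' : x ∈ C'
      · rw [hgC' x hxC']
        have hmem : ((e.symm ⟨x, hxC'⟩ : {x // x ∈ A}) : Fin n) ∈ A :=
          (e.symm ⟨x, hxC'⟩).2
        rw [hgA _ hmem]
        have : (⟨((e.symm ⟨x, hxC'⟩ : {x // x ∈ A}) : Fin n), hmem⟩ : {x // x ∈ A}) =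
            e.symm ⟨x, hxC'⟩ := rfl
        rw [this, Equiv.apply_symm_apply]
      · rw [hgfix x hxA hxC', hgfix x hxA hxC']
  set δ : Equiv.Perm (Fin n) := Function.Involutive.toPerm g hginv with hδdef
  have hδapp : ∀ x, δ x = g x := by
    intro x; rfl
  have hδinv : δ⁻¹ = δ := by
    have : δ * δ = 1 := by
      apply Equiv.ext
      intro x
      simp only [Equiv.Perm.mul_apply, Equiv.Perm.one_apply, hδapp]
      exact hginv x
    calc δ⁻¹ = δ⁻¹ * (δ * δ) := by rw [this, mul_one]
      _ = δ := by group
  -- δ fixes all points of supp π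
  have hδfix_supp : ∀ x : Fin n, x ∈ π.support → δ x = x := by
    intro x hx
    have hxBK := hπsupp hx
    rw [Finset.mem_inter] at hxBK
    have hxA : x ∉ A := by
      rw [hAdef, Finset.mem_sdiff]; tauto
    have hxC' : x ∉ C' := by
      intro h
      have := hC'C h
      rw [hCdef, Finset.mem_sdiff] at this
      exact this.2 hxBK.1
    rw [hδapp]; exact hgfix x hxA hxC'
  -- δ maps B into K (i.e. δ x ∈ K for x ∈ B), and fixes points outside A ∪ C'
  have hδB : ∀ x : Fin n, x ∈ B → δ x ∈ K := by
    intro x hx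
    by_cases hxA : x ∈ A
    · rw [hδapp, hgA x hxA]
      have : ((e ⟨x, hxA⟩ : {x // x ∈ C'}) : Fin n) ∈ C' := (e ⟨x, hxA⟩).2
      have := hC'C this
      rw [hCdef, Finset.mem_sdiff] at this
      exact this.1
    · have hxK : x ∈ K := by
        by_contra h
        exact hxA (Finset.mem_sdiff.mpr ⟨hx, h⟩)
      have hxC' : x ∉ C' := by
        intro h
        have := hC'C h
        rw [hCdef, Finset.mem_sdiff] at this
        exact this.2 hx
      rw [hδapp, hgfix x hxA hxC']
      exact hxK
  have hcomm : δ * π = π * δ := by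
    apply Equiv.ext
    intro x
    simp only [Equiv.Perm.mul_apply]
    by_cases hx : x ∈ π.support
    · rw [hδfix_supp x hx, hδfix_supp (π x) (Equiv.Perm.apply_mem_support.mpr hx)]
    · have hπx : π x = x := Equiv.Perm.notMem_support.mp hx
      rw [hπx]
      by_cases hxA : x ∈ A
      · have hmem : δ x ∈ C' := by rw [hδapp, hgA x hxA]; exact (e ⟨x, hxA⟩).2
        have : δ x ∉ π.support := by
          intro h
          have := (hπsupp h)
          rw [Finset.mem_inter] at this
          have hC := hC'C hmem
          rw [hCdef, Finset.mem_sdiff] at hC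
          exact hC.2 this.1
        rw [Equiv.Perm.notMem_support.mp this]
      · by_cases hxC' : x ∈ C'
        · have hmem : δ x ∈ A := by rw [hδapp, hgC' x hxC']; exact (e.symm ⟨x, hxC'⟩).2
          have : δ x ∉ π.support := by
            intro h
            have := hπsupp h
            rw [Finset.mem_inter] at this
            rw [hAdef, Finset.mem_sdiff] at hmem
            exact hmem.2 this.2
          rw [Equiv.Perm.notMem_support.mp this]
        · rw [hδapp, hgfix x hxA hxC']
          exact hπx.symm ▸ hπx
  -- support of conjugates
  have hconj_supp : ∀ ρ : Equiv.Perm (Fin n),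
      (δ⁻¹ * ρ * δ).support = ρ.support.map δ⁻¹.toEmbedding := by
    intro ρ
    have : δ⁻¹ * ρ * δ = δ⁻¹ * ρ * (δ⁻¹)⁻¹ := by rw [inv_inv]
    rw [this, Equiv.Perm.support_conj]
  have hT : ∀ ρ : Equiv.Perm (Fin n), ρ.support.card ≤ r → (δ⁻¹ * ρ * δ) ∈ T n r := by
    intro ρ hρ
    simp only [T, mem_filter, mem_univ, true_and]
    rw [hconj_supp, Finset.card_map]
    exact hρ
  have hFO : ∀ ρ : Equiv.Perm (Fin n), ρ.support ⊆ B →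
      FixesOutside n (2 * r) (δ⁻¹ * ρ * δ) := by
    intro ρ hρB i hi
    have hiK : i ∉ K := by rw [hKmem]; exact hi
    have hδi : δ i ∉ ρ.support := by
      intro h
      have hB : δ i ∈ B := hρB h
      have : δ (δ i) ∈ K := hδB _ hB
      rw [hδapp, hδapp, hginv i] at this
      exact hiK this
    have : ρ (δ i) = δ i := Equiv.Perm.notMem_support.mp hδi
    simp only [Equiv.Perm.mul_apply, this]
    rw [hδinv, hδapp, hδapp, hginv i]
  have hσB : σ.support ⊆ B := Finset.subset_union_left
  have hτB : τ.support ⊆ B := Finset.subset_union_right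
  refine ⟨δ, hcomm, hT σ hσ, hFO σ hσB, hT τ hτ, hFO τ hτB, ?_⟩
  have : (δ⁻¹ * σ * δ) * (δ⁻¹ * τ * δ) = δ⁻¹ * (σ * τ) * δ := by group
  rw [this, hmul]
  calc δ⁻¹ * π * δ = δ⁻¹ * (π * δ) := by rw [mul_assoc]
    _ = δ⁻¹ * (δ * π) := by rw [← hcomm]
    _ = π := by group
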